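/- arXiv:math/0606023 — 3 statements merged into one kernel-verified Lean document; each statement's English description precedes it below -/
import Mathlib

section
/- Two base point preserving maps f₁, f₂ : S^m → Sⁿ (m, n ≥ 1) form a loose pair (i.e., are homotopic to a coincidence free pair) if and only if f₁ is homotopic to A ∘ f₂, where A : Sⁿ → Sⁿ is the antipodal map. -/
/-- The unit sphere `Sⁿ ⊂ ℝ^{n+1}`. -/
abbrev Sph (n : ℕ) := Metric.sphere (0 : EuclideanSpace ℝ (Fin (n + 1))) 1

/-- The antipodal map `A : Sⁿ → Sⁿ`. -/
noncomputable def antipodal (n : ℕ) : C(Sph n, Sph n) :=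
  ⟨fun y => ⟨-y.1, by simp [y.2]⟩, by continuity⟩

/-- A pair of maps is loose if it is homotopic to a coincidence free pair. -/
def LoosePair {M N : Type*} [TopologicalSpace M] [TopologicalSpace N]
    (f₁ f₂ : C(M, N)) : Prop :=
  ∃ f₁' f₂' : C(M, N), f₁.Homotopic f₁' ∧ f₂.Homotopic f₂' ∧ ∀ x : M, f₁' x ≠ f₂' x

lemma seg_ne_zero {n : ℕ} (u v : EuclideanSpace ℝ (Fin (n + 1))) (hu : ‖u‖ = 1) (hv : ‖v‖ = 1)
    (huv : u ≠ -v) (t : ℝ) (ht0 : 0 ≤ t) (ht1 : t ≤ 1) :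
    (1 - t) • u + t • v ≠ 0 := by
  intro h
  have h1 : (1 - t) • u = -(t • v) := eq_neg_of_add_eq_zero_left h
  have h2 : ‖(1 - t) • u‖ = ‖t • v‖ := by rw [h1, norm_neg]
  rw [norm_smul, norm_smul, hu, hv, mul_one, mul_one, Real.norm_eq_abs, Real.norm_eq_abs,
    abs_of_nonneg (by linarith : (0:ℝ) ≤ 1 - t), abs_of_nonneg ht0] at h2
  have ht : t = 1 / 2 := by linarith
  apply huv
  have h3 : (1 / 2 : ℝ) • u = (1 / 2 : ℝ) • (-v) := by
    rw [smul_neg]; rw [ht] at h1; convert h1 using 2 <;> norm_num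
  have := smul_right_injective (EuclideanSpace ℝ (Fin (n + 1))) (by norm_num : (1/2:ℝ) ≠ 0) h3
  exact this

lemma homotopic_of_ne_neg {X : Type*} [TopologicalSpace X] {n : ℕ}
    (f g : C(X, Sph n)) (h : ∀ x, (f x : EuclideanSpace ℝ (Fin (n + 1))) ≠ -(g x : EuclideanSpace ℝ (Fin (n + 1)))) :
    f.Homotopic g := by
  classical
  set w : unitInterval × X → EuclideanSpace ℝ (Fin (n + 1)) := fun p =>
    (1 - (p.1 : ℝ)) • ((f p.2 : EuclideanSpace ℝ (Fin (n + 1)))) +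
      (p.1 : ℝ) • ((g p.2 : EuclideanSpace ℝ (Fin (n + 1)))) with hwdef
  have hw : ∀ p, w p ≠ 0 := by
    intro p
    exact seg_ne_zero _ _ (by simpa using (f p.2).2) (by simpa using (g p.2).2)
      (h p.2) _ p.1.2.1 p.1.2.2
  have hwc : Continuous w := by
    apply Continuous.add
    · exact (continuous_const.sub (continuous_subtype_val.comp continuous_fst)).smul
        (continuous_subtype_val.comp (f.continuous.comp continuous_snd))
    · exact (continuous_subtype_val.comp continuous_fst).smul
        (continuous_subtype_val.comp (g.continuous.comp continuous_snd))
  have hmem : ∀ p, ‖w p‖⁻¹ • w p ∈ Sph n := by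
    intro p
    rw [mem_sphere_zero_iff_norm, norm_smul, norm_inv, norm_norm]
    exact inv_mul_cancel₀ (norm_ne_zero_iff.2 (hw p))
  refine ⟨⟨⟨fun p => ⟨‖w p‖⁻¹ • w p, hmem p⟩, ?_⟩, ?_, ?_⟩⟩
  · exact ((hwc.norm.inv₀ fun p => norm_ne_zero_iff.2 (hw p)).smul hwc).subtype_mk _
  · intro x
    apply Subtype.ext
    show ‖w (0, x)‖⁻¹ • w (0, x) = (f x : EuclideanSpace ℝ (Fin (n + 1)))
    simp [hwdef, norm_eq_of_mem_sphere (f x)]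
  · intro x
    apply Subtype.ext
    show ‖w (1, x)‖⁻¹ • w (1, x) = (g x : EuclideanSpace ℝ (Fin (n + 1)))
    simp [hwdef, norm_eq_of_mem_sphere (g x)]

/-- Two base point preserving maps `f₁, f₂ : Sᵐ → Sⁿ` (`m, n ≥ 1`) form a
loose pair if and only if `f₁` is homotopic to `A ∘ f₂`, where `A` is the antipodal map. -/
theorem stmt5 (m n : ℕ) (hm : 1 ≤ m) (hn : 1 ≤ n)
    (pt : Sph m) (y₁ y₂ : Sph n)
    (f₁ f₂ : C(Sph m, Sph n)) (hf₁ : f₁ pt = y₁) (hf₂ : f₂ pt = y₂) :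
    LoosePair f₁ f₂ ↔ f₁.Homotopic ((antipodal n).comp f₂) := by
  constructor
  · rintro ⟨f₁', f₂', h1, h2, hne⟩
    have key : f₁'.Homotopic ((antipodal n).comp f₂') := by
      apply homotopic_of_ne_neg
      intro x
      simp only [ContinuousMap.comp_apply, antipodal, ContinuousMap.coe_mk]
      show (f₁' x : EuclideanSpace ℝ (Fin (n + 1))) ≠ -(-(f₂' x : EuclideanSpace ℝ (Fin (n + 1))))
      rw [neg_neg]
      intro hc
      exact hne x (Subtype.ext hc)
    exact (h1.trans key).trans (((ContinuousMap.Homotopic.refl (antipodal n)).comp h2.symm))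
  · intro h
    refine ⟨(antipodal n).comp f₂, f₂, h, ContinuousMap.Homotopic.refl _, ?_⟩
    intro x
    simp only [ContinuousMap.comp_apply, antipodal, ContinuousMap.coe_mk]
    intro hc
    have : -(f₂ x : EuclideanSpace ℝ (Fin (n + 1))) = (f₂ x : EuclideanSpace ℝ (Fin (n + 1))) :=
      congrArg Subtype.val hc
    have hz : (f₂ x : EuclideanSpace ℝ (Fin (n + 1))) = 0 := by
      have h2 : (f₂ x : EuclideanSpace ℝ (Fin (n + 1))) + (f₂ x : EuclideanSpace ℝ (Fin (n + 1))) = 0 :=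
        neg_eq_iff_add_eq_zero.mp this
      rw [← two_smul ℝ] at h2
      rcases smul_eq_zero.mp h2 with h | h
      · norm_num at h
      · exact h
    have := (f₂ x).2
    rw [mem_sphere_zero_iff_norm, hz] at this
    simp at this
end

section
/- For n ≥ 1, for q ≥ 3 the projection C̃_q(Sⁿ) → C̃₃(Sⁿ) (forgetting the last q−3 points) admits a section up to the identification C̃₃(Sⁿ) ≃ TSⁿ − (zero section); hence for every topological space M and all q ≥ 3, [M, Sⁿ]^(q) = [M, Sⁿ]^(3), and [M, Sⁿ]^(3) = p_{R*}([M, V_{n+1,2}(R)]) where p_R : V_{n+1,2}(R) → Sⁿ projects a frame to its first vector. -/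
open scoped RealInnerProductSpace

/-- Ordered configuration space `C̃_q(N)` of `q` pairwise distinct points in `N`. -/
def Cfg (q : ℕ) (N : Type*) [TopologicalSpace N] : Type _ :=
  {y : Fin q → N // ∀ i j : Fin q, i ≠ j → y i ≠ y j}

instance (q : ℕ) (N : Type*) [TopologicalSpace N] : TopologicalSpace (Cfg q N) :=
  inferInstanceAs (TopologicalSpace {y : Fin q → N // ∀ i j : Fin q, i ≠ j → y i ≠ y j})

/-- The projection `p_q : C̃_q(N) → N` to the first point of a configuration. -/
def cfgProj (q : ℕ) (hq : 0 < q) (N : Type*) [TopologicalSpace N] : C(Cfg q N, N) :=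
  ⟨fun y => y.1 ⟨0, hq⟩, (continuous_apply _).comp continuous_subtype_val⟩

/-- The Stiefel manifold `V_{r,2}(ℝ)` of orthonormal 2-frames in `ℝ^r`. -/
def StiefelR (r : ℕ) : Type :=
  {w : EuclideanSpace ℝ (Fin r) × EuclideanSpace ℝ (Fin r) //
    ‖w.1‖ = 1 ∧ ‖w.2‖ = 1 ∧ ⟪w.1, w.2⟫ = 0}

noncomputable instance (r : ℕ) : TopologicalSpace (StiefelR r) :=
  inferInstanceAs (TopologicalSpace {w : EuclideanSpace ℝ (Fin r) × EuclideanSpace ℝ (Fin r) //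
    ‖w.1‖ = 1 ∧ ‖w.2‖ = 1 ∧ ⟪w.1, w.2⟫ = 0})

/-- The projection `p_ℝ : V_{r,2}(ℝ) → S^{r-1}` of a frame to its first vector. -/
noncomputable def stiefelProj (r : ℕ) :
    C(StiefelR r, Metric.sphere (0 : EuclideanSpace ℝ (Fin r)) 1) :=
  ⟨fun w => ⟨w.1.1, by simp [w.2.1]⟩, by
    apply Continuous.subtype_mk
    exact continuous_fst.comp continuous_subtype_val⟩

/-- The standard orthonormal 2-frame `(e₀, e₁)` in `ℝ^r`, `r ≥ 2`. -/
noncomputable def baseFrame (r : ℕ) (hr : 2 ≤ r) : StiefelR r :=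
  ⟨(EuclideanSpace.single ⟨0, by omega⟩ 1, EuclideanSpace.single ⟨1, by omega⟩ 1),
    by simp, by simp,
    by rw [EuclideanSpace.inner_single_left]; simp [EuclideanSpace.single_apply]⟩

/-- The base point `e₀` of the sphere `S^{r-1} ⊂ ℝ^r` (`r ≥ 1`). -/
noncomputable def spherePt (r : ℕ) (hr : 1 ≤ r) :
    Metric.sphere (0 : EuclideanSpace ℝ (Fin r)) 1 :=
  ⟨EuclideanSpace.single ⟨0, by omega⟩ 1, by simp⟩

/-- The map `C̃_q(N) → C̃₃(N)` forgetting all but the first three points (`q ≥ 3`). -/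
def cfgRestrict (q : ℕ) (hq : 3 ≤ q) (N : Type*) [TopologicalSpace N] :
    C(Cfg q N, Cfg 3 N) :=
  ⟨fun y => ⟨fun i => y.1 ⟨i.1, lt_of_lt_of_le i.2 hq⟩,
      fun i j hij => y.2 _ _ (by simpa [Fin.ext_iff] using hij)⟩,
    by
      apply Continuous.subtype_mk
      exact continuous_pi fun i => (continuous_apply _).comp continuous_subtype_val⟩

namespace Stmt15Aux
variable {E : Type*} [NormedAddCommGroup E] [InnerProductSpace ℝ E]

/-- stereographic projection from `x` -/
noncomputable def st (x y : E) : E := (1 - ⟪y, x⟫)⁻¹ • (y - ⟪y, x⟫ • x)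
/-- inverse stereographic projection from `x` -/
noncomputable def isp (x p : E) : E := (‖p‖ ^ 2 + 1)⁻¹ • ((‖p‖ ^ 2 - 1) • x + (2:ℝ) • p)

lemma inner_ne_one {x y : E} (hx : ‖x‖ = 1) (hy : ‖y‖ = 1) (h : y ≠ x) : ⟪y, x⟫ ≠ 1 := by
  intro h1
  apply h
  have h2 : ‖y - x‖ ^ 2 = 0 := by
    rw [norm_sub_sq_real, hx, hy, h1]; ring
  have h3 : ‖y - x‖ = 0 := by
    have := sq_eq_zero_iff.mp h2
    exact this
  rw [norm_sub_eq_zero_iff] at h3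
  exact h3

lemma st_inner {x : E} (hx : ‖x‖ = 1) (y : E) : ⟪st x y, x⟫ = 0 := by
  rw [st, real_inner_smul_left, inner_sub_left, real_inner_smul_left,
    real_inner_self_eq_norm_sq, hx]
  ring

lemma isp_inner {x p : E} (hx : ‖x‖ = 1) (hp : ⟪p, x⟫ = 0) :
    ⟪isp x p, x⟫ = (‖p‖^2 - 1)/(‖p‖^2 + 1) := by
  rw [isp, real_inner_smul_left, inner_add_left, real_inner_smul_left, real_inner_smul_left,
    real_inner_self_eq_norm_sq, hx, hp]
  ring

lemma isp_ne {x p : E} (hx : ‖x‖ = 1) (hp : ⟪p, x⟫ = 0) : isp x p ≠ x := by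
  intro h
  have h1 := isp_inner hx hp
  rw [h, real_inner_self_eq_norm_sq, hx] at h1
  have h2 : ‖p‖^2 + 1 ≠ 0 := by positivity
  rw [eq_div_iff h2] at h1
  nlinarith [sq_nonneg ‖p‖]

lemma isp_norm {x p : E} (hx : ‖x‖ = 1) (hp : ⟪p, x⟫ = 0) : ‖isp x p‖ = 1 := by
  have h2 : (‖p‖:ℝ)^2 + 1 ≠ 0 := by positivity
  have key : ‖isp x p‖^2 = 1 := by
    rw [← real_inner_self_eq_norm_sq, isp]
    rw [real_inner_smul_left, real_inner_smul_right, inner_add_left, inner_add_right,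
      inner_add_right, real_inner_smul_left, real_inner_smul_left, real_inner_smul_left,
      real_inner_smul_right, real_inner_smul_right, real_inner_smul_right,
      real_inner_self_eq_norm_sq, real_inner_self_eq_norm_sq, hx, hp, real_inner_comm p x, hp,
      norm_smul, Real.norm_ofNat, mul_pow]
    field_simp
    ring
  nlinarith [norm_nonneg (isp x p)]

lemma st_isp {x p : E} (hx : ‖x‖ = 1) (hp : ⟪p, x⟫ = 0) : st x (isp x p) = p := by
  have h2 : (‖p‖:ℝ)^2 + 1 ≠ 0 := by positivity
  rw [st, isp_inner hx hp, isp]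
  have h3 : 1 - (‖p‖^2 - 1)/(‖p‖^2 + 1) = 2/(‖p‖^2 + 1) := by field_simp; ring
  rw [h3]
  match_scalars <;> first
    | (field_simp; ring)
    | field_simp
    | norm_num

lemma isp_st {x y : E} (hx : ‖x‖ = 1) (hy : ‖y‖ = 1) (hne : y ≠ x) : isp x (st x y) = y := by
  have ha : ⟪y, x⟫ ≠ 1 := inner_ne_one hx hy hne
  have ha' : 1 - ⟪y, x⟫ ≠ 0 := sub_ne_zero.mpr (Ne.symm ha)
  have hnorm : ‖st x y‖^2 = (1 + ⟪y, x⟫)/(1 - ⟪y, x⟫) := by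
    rw [st, norm_smul, mul_pow, norm_sub_sq_real, real_inner_smul_right, norm_smul, hx, hy,
      mul_one, Real.norm_eq_abs, Real.norm_eq_abs, sq_abs, sq_abs]
    field_simp
    ring
  rw [isp, hnorm, st]
  have hb : (1 + ⟪y, x⟫)/(1 - ⟪y, x⟫) + 1 = 2/(1 - ⟪y, x⟫) := by field_simp; ring
  have hb' : (1 + ⟪y, x⟫)/(1 - ⟪y, x⟫) - 1 = 2*⟪y, x⟫/(1 - ⟪y, x⟫) := by field_simp; ring
  rw [hb, hb']
  match_scalars <;> first
    | (field_simp; ring)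
    | field_simp
    | norm_num


noncomputable def circPt (u v : E) (t : ℝ) : E := Real.cos t • u + Real.sin t • v

lemma circPt_norm {u v : E} (hu : ‖u‖ = 1) (hv : ‖v‖ = 1) (huv : ⟪u, v⟫ = 0) (t : ℝ) :
    ‖circPt u v t‖ = 1 := by
  have huu : ⟪u, u⟫ = 1 := by rw [real_inner_self_eq_norm_sq, hu]; norm_num
  have hvv : ⟪v, v⟫ = 1 := by rw [real_inner_self_eq_norm_sq, hv]; norm_num
  have hvu : ⟪v, u⟫ = 0 := by rw [real_inner_comm]; exact huv
  have key : ‖circPt u v t‖^2 = 1 := by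
    rw [circPt, ← real_inner_self_eq_norm_sq]
    simp only [inner_add_left, inner_add_right, real_inner_smul_left, real_inner_smul_right,
      huu, hvv, huv, hvu]
    have := Real.sin_sq_add_cos_sq t
    nlinarith
  nlinarith [norm_nonneg (circPt u v t)]

lemma circPt_inj_aux {u v : E} (hu : ‖u‖ = 1) (hv : ‖v‖ = 1) (huv : ⟪u, v⟫ = 0) {s t : ℝ}
    (h : circPt u v s = circPt u v t) : Real.cos s = Real.cos t ∧ Real.sin s = Real.sin t := by
  have huu : ⟪u, u⟫ = 1 := by rw [real_inner_self_eq_norm_sq, hu]; norm_num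
  have hvv : ⟪v, v⟫ = 1 := by rw [real_inner_self_eq_norm_sq, hv]; norm_num
  have hvu : ⟪v, u⟫ = 0 := by rw [real_inner_comm]; exact huv
  constructor
  · have := congrArg (fun z => ⟪z, u⟫) h
    have h' : Real.cos s = Real.cos t ∨ u = 0 := by
      simpa [circPt, inner_add_left, real_inner_smul_left, huu, hvu] using this
    exact h'.resolve_right (fun h0 => by simp [h0] at hu)
  · have := congrArg (fun z => ⟪z, v⟫) h
    have h' : Real.sin s = Real.sin t ∨ v = 0 := by
      simpa [circPt, inner_add_left, real_inner_smul_left, hvv, huv] using this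
    exact h'.resolve_right (fun h0 => by simp [h0] at hv)

lemma nat_angle_inj {i j : ℕ} (hc : Real.cos i = Real.cos j) (hs : Real.sin i = Real.sin j) :
    i = j := by
  have h1 : Complex.cos i = Complex.cos j := by
    rw [← Complex.ofReal_natCast, ← Complex.ofReal_natCast, ← Complex.ofReal_cos,
      ← Complex.ofReal_cos, hc]
  have h2 : Complex.sin i = Complex.sin j := by
    rw [← Complex.ofReal_natCast, ← Complex.ofReal_natCast, ← Complex.ofReal_sin,
      ← Complex.ofReal_sin, hs]
  have h3 : Complex.exp (i * Complex.I) = Complex.exp (j * Complex.I) := by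
    rw [Complex.exp_mul_I, Complex.exp_mul_I, h1, h2]
  rw [Complex.exp_eq_exp_iff_exists_int] at h3
  obtain ⟨m, hm⟩ := h3
  have hm2 : ((i : ℂ)) * Complex.I = ((j : ℝ) + m * (2 * Real.pi) : ℝ) * Complex.I := by
    rw [hm]; push_cast; ring
  have hm3 : ((i : ℝ) : ℂ) = (((j : ℝ) + m * (2 * Real.pi) : ℝ) : ℂ) := by
    have := mul_right_cancel₀ Complex.I_ne_zero hm2
    push_cast at this ⊢
    exact this
  have hR : (i : ℝ) = (j : ℝ) + m * (2 * Real.pi) := by exact_mod_cast hm3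
  rcases eq_or_ne m 0 with h0 | h0
  · rw [h0] at hR
    simp at hR
    exact_mod_cast hR
  · exfalso
    have hm0 : ((m : ℝ)) ≠ 0 := Int.cast_ne_zero.mpr h0
    apply irrational_pi
    refine ⟨((i : ℚ) - (j : ℚ)) / (2 * (m : ℚ)), ?_⟩
    push_cast
    field_simp
    linarith


section Sphere
variable {n : ℕ}

noncomputable def pt {q : ℕ} (y : Cfg q (Sph n)) (i : Fin q) : EuclideanSpace ℝ (Fin (n+1)) :=
  (y.1 i : EuclideanSpace ℝ (Fin (n+1)))

lemma pt_norm {q : ℕ} (y : Cfg q (Sph n)) (i : Fin q) : ‖pt y i‖ = 1 :=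
  mem_sphere_zero_iff_norm.mp (y.1 i).2

lemma pt_ne {q : ℕ} (y : Cfg q (Sph n)) {i j : Fin q} (h : i ≠ j) : pt y i ≠ pt y j :=
  fun hh => y.2 i j h (Subtype.ext hh)

lemma cont_pt {q : ℕ} (i : Fin q) : Continuous fun y : Cfg q (Sph n) => pt y i :=
  continuous_subtype_val.comp ((continuous_apply i).comp continuous_subtype_val)

noncomputable def stp (y : Cfg 3 (Sph n)) (i : Fin 3) : EuclideanSpace ℝ (Fin (n+1)) :=
  st (pt y 0) (pt y i)

lemma stp_inner (y : Cfg 3 (Sph n)) (i : Fin 3) : ⟪stp y i, pt y 0⟫ = 0 :=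
  st_inner (pt_norm y 0) _

lemma stp_isp (y : Cfg 3 (Sph n)) (i : Fin 3) (hi : i ≠ 0) :
    isp (pt y 0) (stp y i) = pt y i :=
  isp_st (pt_norm y 0) (pt_norm y i) (pt_ne y hi)

lemma stp_ne (y : Cfg 3 (Sph n)) : stp y 1 ≠ stp y 2 := by
  intro h
  have h2 := congrArg (isp (pt y 0)) h
  rw [stp_isp y 1 (by decide), stp_isp y 2 (by decide)] at h2
  exact pt_ne y (show (1 : Fin 3) ≠ 2 by decide) h2

lemma cont_stp (i : Fin 3) (hi : i ≠ 0) : Continuous fun y : Cfg 3 (Sph n) => stp y i := by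
  simp only [stp, st]
  have hc : Continuous fun y : Cfg 3 (Sph n) => ⟪pt y i, pt y 0⟫ :=
    (cont_pt i).inner (cont_pt 0)
  have hne : ∀ y : Cfg 3 (Sph n), 1 - ⟪pt y i, pt y 0⟫ ≠ 0 := fun y =>
    sub_ne_zero.mpr (Ne.symm (inner_ne_one (pt_norm y 0) (pt_norm y i) (pt_ne y hi)))
  exact ((continuous_const.sub hc).inv₀ hne).smul ((cont_pt i).sub (hc.smul (cont_pt 0)))

noncomputable def LL (y : Cfg 3 (Sph n)) : ℝ := ‖stp y 1 - stp y 2‖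

lemma LL_pos (y : Cfg 3 (Sph n)) : 0 < LL y :=
  norm_pos_iff.mpr (sub_ne_zero.mpr (stp_ne y))

lemma cont_LL : Continuous fun y : Cfg 3 (Sph n) => LL y :=
  ((cont_stp 1 (by decide)).sub (cont_stp 2 (by decide))).norm

noncomputable def cPt (y : Cfg 3 (Sph n)) (k : ℕ) : EuclideanSpace ℝ (Fin (n+1)) :=
  stp y 1 + ((k : ℝ) * (LL y + 1) * (LL y)⁻¹) • (stp y 1 - stp y 2)

lemma cont_cPt (k : ℕ) : Continuous fun y : Cfg 3 (Sph n) => cPt y k := by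
  simp only [cPt]
  exact (cont_stp 1 (by decide)).add
    (((continuous_const.mul (cont_LL.add continuous_const)).mul
      (cont_LL.inv₀ fun y => ne_of_gt (LL_pos y))).smul
      ((cont_stp 1 (by decide)).sub (cont_stp 2 (by decide))))

lemma cPt_inner (y : Cfg 3 (Sph n)) (k : ℕ) : ⟪cPt y k, pt y 0⟫ = 0 := by
  rw [cPt, inner_add_left, real_inner_smul_left, inner_sub_left, stp_inner, stp_inner]
  ring

lemma cPt_ne_one (y : Cfg 3 (Sph n)) {k : ℕ} (hk : 1 ≤ k) : cPt y k ≠ stp y 1 := by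
  intro h
  have h2 : ((k : ℝ) * (LL y + 1) * (LL y)⁻¹) • (stp y 1 - stp y 2) = 0 := by
    have := sub_eq_zero.mpr h
    rw [cPt] at this
    calc ((k : ℝ) * (LL y + 1) * (LL y)⁻¹) • (stp y 1 - stp y 2)
        = stp y 1 + ((k : ℝ) * (LL y + 1) * (LL y)⁻¹) • (stp y 1 - stp y 2) - stp y 1 := by abel
      _ = 0 := this
  rcases smul_eq_zero.mp h2 with hc | hv
  · have hk' : (0:ℝ) < (k : ℝ) := by exact_mod_cast hk
    have hL := LL_pos y
    have hpos : (0:ℝ) < (k : ℝ) * (LL y + 1) * (LL y)⁻¹ :=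
      mul_pos (mul_pos hk' (by linarith)) (inv_pos.mpr hL)
    exact absurd hc (ne_of_gt hpos)
  · exact stp_ne y (sub_eq_zero.mp hv)

lemma cPt_ne_two (y : Cfg 3 (Sph n)) (k : ℕ) : cPt y k ≠ stp y 2 := by
  intro h
  have h2 : cPt y k - stp y 2
      = ((k : ℝ) * (LL y + 1) * (LL y)⁻¹ + 1) • (stp y 1 - stp y 2) := by
    rw [cPt]; module
  rw [sub_eq_zero.mpr h] at h2
  rcases smul_eq_zero.mp h2.symm with hc | hv
  · have hL := LL_pos y
    have hk' : (0:ℝ) ≤ (k : ℝ) := Nat.cast_nonneg k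
    have hpos : (0:ℝ) < (k : ℝ) * (LL y + 1) * (LL y)⁻¹ + 1 := by positivity
    linarith
  · exact stp_ne y (sub_eq_zero.mp hv)

lemma cPt_inj (y : Cfg 3 (Sph n)) {k l : ℕ} (h : cPt y k = cPt y l) : k = l := by
  have h2 : cPt y k - cPt y l
      = (((k : ℝ) - l) * ((LL y + 1) * (LL y)⁻¹)) • (stp y 1 - stp y 2) := by
    rw [cPt, cPt]; module
  rw [sub_eq_zero.mpr h] at h2
  rcases smul_eq_zero.mp h2.symm with hc | hv
  · have hL := LL_pos y
    have hpos : (0:ℝ) < (LL y + 1) * (LL y)⁻¹ := by positivity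
    have : ((k : ℝ) - l) = 0 := by
      rcases mul_eq_zero.mp hc with h' | h'
      · exact h'
      · exact absurd h' (ne_of_gt hpos)
    have : (k : ℝ) = l := by linarith
    exact_mod_cast this
  · exact absurd (sub_eq_zero.mp hv) (stp_ne y)

noncomputable def secVal (y : Cfg 3 (Sph n)) (m : ℕ) : EuclideanSpace ℝ (Fin (n+1)) :=
  isp (pt y 0) (cPt y m)

lemma secVal_norm (y : Cfg 3 (Sph n)) (m : ℕ) : ‖secVal y m‖ = 1 :=
  isp_norm (pt_norm y 0) (cPt_inner y m)

lemma cont_secVal (m : ℕ) : Continuous fun y : Cfg 3 (Sph n) => secVal y m := by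
  simp only [secVal, isp]
  have hp := cont_cPt (n := n) m
  have hx := cont_pt (n := n) (q := 3) 0
  have hn : Continuous fun y : Cfg 3 (Sph n) => ‖cPt y m‖ ^ 2 := (hp.norm).pow 2
  exact ((hn.add continuous_const).inv₀
      fun y => ne_of_gt (by positivity : (0:ℝ) < ‖cPt y m‖ ^ 2 + 1)).smul
    (((hn.sub continuous_const).smul hx).add (hp.const_smul (2:ℝ)))

lemma secVal_ne_pt (y : Cfg 3 (Sph n)) {m : ℕ} (hm : 1 ≤ m) (i : Fin 3) :
    secVal y m ≠ pt y i := by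
  fin_cases i
  · exact isp_ne (pt_norm y 0) (cPt_inner y m)
  · intro h
    apply cPt_ne_one y hm
    have h2 := congrArg (st (pt y 0)) h
    rw [secVal, st_isp (pt_norm y 0) (cPt_inner y m)] at h2
    exact h2
  · intro h
    apply cPt_ne_two y m
    have h2 := congrArg (st (pt y 0)) h
    rw [secVal, st_isp (pt_norm y 0) (cPt_inner y m)] at h2
    exact h2

lemma secVal_inj (y : Cfg 3 (Sph n)) {m l : ℕ} (h : secVal y m = secVal y l) : m = l := by
  apply cPt_inj y
  have h2 := congrArg (st (pt y 0)) h
  rwa [secVal, secVal, st_isp (pt_norm y 0) (cPt_inner y m),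
    st_isp (pt_norm y 0) (cPt_inner y l)] at h2

noncomputable def secFun (q : ℕ) (y : Cfg 3 (Sph n)) : Cfg q (Sph n) :=
  ⟨fun i => if h : i.1 < 3 then y.1 ⟨i.1, h⟩
            else ⟨secVal y (i.1 - 2), mem_sphere_zero_iff_norm.mpr (secVal_norm y _)⟩,
   by
    intro i j hij h
    dsimp only at h
    have hij' : i.1 ≠ j.1 := fun hv => hij (Fin.ext hv)
    by_cases hi : i.1 < 3 <;> by_cases hj : j.1 < 3
    · rw [dif_pos hi, dif_pos hj] at h
      exact y.2 ⟨i.1, hi⟩ ⟨j.1, hj⟩ (by simpa [Fin.ext_iff] using hij') h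
    · rw [dif_pos hi, dif_neg hj] at h
      have h2 := congrArg Subtype.val h
      exact secVal_ne_pt y (by omega) ⟨i.1, hi⟩ h2.symm
    · rw [dif_neg hi, dif_pos hj] at h
      have h2 := congrArg Subtype.val h
      exact secVal_ne_pt y (by omega) ⟨j.1, hj⟩ h2
    · rw [dif_neg hi, dif_neg hj] at h
      have h2 := congrArg Subtype.val h
      have := secVal_inj y h2
      omega⟩

lemma cont_secFun (q : ℕ) : Continuous (secFun (n := n) q) := by
  unfold secFun
  apply Continuous.subtype_mk
  apply continuous_pi
  intro i
  by_cases hi : i.1 < 3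
  · simp only [dif_pos hi]
    exact (continuous_apply _).comp continuous_subtype_val
  · simp only [dif_neg hi]
    exact Continuous.subtype_mk (cont_secVal _) _

noncomputable def frameFun (y : Cfg 3 (Sph n)) : StiefelR (n+1) :=
  ⟨(pt y 0, (LL y)⁻¹ • (stp y 1 - stp y 2)),
   pt_norm y 0,
   by
    rw [norm_smul, Real.norm_eq_abs, abs_inv, abs_of_pos (LL_pos y)]
    exact inv_mul_cancel₀ (ne_of_gt (LL_pos y)),
   by
    show ⟪pt y 0, (LL y)⁻¹ • (stp y 1 - stp y 2)⟫ = 0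
    have e1 : ⟪pt y 0, stp y 1⟫ = 0 := by rw [real_inner_comm]; exact stp_inner y 1
    have e2 : ⟪pt y 0, stp y 2⟫ = 0 := by rw [real_inner_comm]; exact stp_inner y 2
    rw [real_inner_smul_right, inner_sub_right, e1, e2]
    ring⟩

lemma cont_frameFun : Continuous (frameFun (n := n)) := by
  unfold frameFun
  apply Continuous.subtype_mk
  exact (cont_pt 0).prodMk
    ((cont_LL.inv₀ fun y => ne_of_gt (LL_pos y)).smul
      ((cont_stp 1 (by decide)).sub (cont_stp 2 (by decide))))

noncomputable def circFun (q : ℕ) (w : StiefelR (n+1)) : Cfg q (Sph n) :=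
  ⟨fun i => ⟨circPt w.1.1 w.1.2 i.1,
      mem_sphere_zero_iff_norm.mpr (circPt_norm w.2.1 w.2.2.1 w.2.2.2 _)⟩,
   by
    intro i j hij h
    have h2 := congrArg Subtype.val h
    obtain ⟨hc, hs⟩ := circPt_inj_aux w.2.1 w.2.2.1 w.2.2.2 h2
    exact hij (Fin.ext (nat_angle_inj hc hs))⟩

lemma cont_circFun (q : ℕ) : Continuous (circFun (n := n) q) := by
  unfold circFun
  apply Continuous.subtype_mk
  apply continuous_pi
  intro i
  apply Continuous.subtype_mk
  have h1 : Continuous fun w : StiefelR (n+1) => w.1.1 :=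
    continuous_fst.comp continuous_subtype_val
  have h2 : Continuous fun w : StiefelR (n+1) => w.1.2 :=
    continuous_snd.comp continuous_subtype_val
  exact (h1.const_smul (Real.cos (i.1 : ℝ))).add (h2.const_smul (Real.sin (i.1 : ℝ)))

end Sphere
end Stmt15Aux

open Stmt15Aux in
/-- For `n ≥ 1` and `q ≥ 3`, the projection `C̃_q(Sⁿ) → C̃₃(Sⁿ)` admits a
section up to homotopy; hence for every topological space `M` and all `q ≥ 3`,
`[M, Sⁿ]^(q) = [M, Sⁿ]^(3) = p_{ℝ*}([M, V_{n+1,2}(ℝ)])`, where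
`p_ℝ : V_{n+1,2}(ℝ) → Sⁿ` projects a frame to its first vector. -/
theorem stmt15 (n : ℕ) (hn : 1 ≤ n) (q : ℕ) (hq : 3 ≤ q) :
    (∃ s : C(Cfg 3 (Sph n), Cfg q (Sph n)),
      ((cfgRestrict q hq (Sph n)).comp s).Homotopic (ContinuousMap.id _)) ∧
    ∀ (M : Type) [TopologicalSpace M] (f : C(M, Sph n)),
      (∃ g : C(M, Cfg q (Sph n)), f.Homotopic ((cfgProj q (by omega) (Sph n)).comp g)) ↔
      (∃ h : C(M, StiefelR (n + 1)), f.Homotopic ((stiefelProj (n + 1)).comp h)) := by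
  constructor
  · refine ⟨⟨secFun q, cont_secFun q⟩, ?_⟩
    have heq : (cfgRestrict q hq (Sph n)).comp ⟨secFun q, cont_secFun q⟩
        = ContinuousMap.id _ := by
      apply ContinuousMap.ext
      intro y
      apply Subtype.ext
      funext i
      show (secFun q y).1 ⟨i.1, lt_of_lt_of_le i.2 hq⟩ = y.1 i
      simp only [secFun, dif_pos (show ((⟨i.1, lt_of_lt_of_le i.2 hq⟩ : Fin q)).1 < 3 from i.2)]
    rw [heq]
  · intro M _ f
    constructor
    · rintro ⟨g, hg⟩
      refine ⟨(⟨frameFun, cont_frameFun⟩ : C(Cfg 3 (Sph n), StiefelR (n+1))).comp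
        ((cfgRestrict q hq (Sph n)).comp g), ?_⟩
      have heq : (stiefelProj (n+1)).comp
          ((⟨frameFun, cont_frameFun⟩ : C(Cfg 3 (Sph n), StiefelR (n+1))).comp
            ((cfgRestrict q hq (Sph n)).comp g))
          = (cfgProj q (by omega) (Sph n)).comp g := by
        apply ContinuousMap.ext
        intro m
        apply Subtype.ext
        rfl
      rw [heq]
      exact hg
    · rintro ⟨h, hh⟩
      refine ⟨(⟨circFun q, cont_circFun q⟩ : C(StiefelR (n+1), Cfg q (Sph n))).comp h, ?_⟩
      have heq : (cfgProj q (by omega) (Sph n)).comp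
          ((⟨circFun q, cont_circFun q⟩ : C(StiefelR (n+1), Cfg q (Sph n))).comp h)
          = (stiefelProj (n+1)).comp h := by
        apply ContinuousMap.ext
        intro m
        apply Subtype.ext
        show circPt (h m).1.1 (h m).1.2 (((⟨0, by omega⟩ : Fin q)).1 : ℝ) = (h m).1.1
        simp [circPt]
      rw [heq]
      exact hh
end

section
/- If n is odd, then [M, Sⁿ]^(q) = [M, Sⁿ] for every topological space M and every q ≥ 1. -/
open scoped RealInnerProductSpace

noncomputable section AuxJ

/-- A "rotation by 90°" style map on a Euclidean space whose index set is paired off. -/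
def Jmap {ι α : Type*} [DecidableEq ι] (e : ι ≃ α × Fin 2) (x : EuclideanSpace ℝ ι) :
    EuclideanSpace ℝ ι :=
  WithLp.toLp 2 (fun i => if (e i).2 = 0 then -(x (e.symm ((e i).1, 1))) else x (e.symm ((e i).1, 0)))

variable {ι α : Type*} [DecidableEq ι] [Fintype ι] [Fintype α] (e : ι ≃ α × Fin 2)

lemma Jmap_sum (x : EuclideanSpace ℝ ι) (F : ℝ → ℝ → ℝ) :
    ∑ i, F (x i) (Jmap e x i) =
      ∑ a : α, (F (x (e.symm (a, 0))) (-(x (e.symm (a, 1)))) +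
        F (x (e.symm (a, 1))) (x (e.symm (a, 0)))) := by
  rw [← Equiv.sum_comp e.symm, Fintype.sum_prod_type]
  refine Finset.sum_congr rfl fun a _ => ?_
  rw [Fin.sum_univ_two]
  simp only [Jmap, WithLp.ofLp_toLp]
  rw [Equiv.apply_symm_apply, Equiv.apply_symm_apply]
  simp

lemma Jmap_norm (x : EuclideanSpace ℝ ι) : ‖Jmap e x‖ = ‖x‖ := by
  rw [EuclideanSpace.norm_eq, EuclideanSpace.norm_eq]
  congr 1
  have h := Jmap_sum e x (fun _ b => b ^ 2)
  simp only [Real.norm_eq_abs, sq_abs]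
  rw [h, ← Equiv.sum_comp e.symm (fun i => x i ^ 2), Fintype.sum_prod_type]
  refine Finset.sum_congr rfl fun a _ => ?_
  rw [Fin.sum_univ_two]
  ring

lemma Jmap_inner (x : EuclideanSpace ℝ ι) : ⟪x, Jmap e x⟫ = 0 := by
  rw [PiLp.inner_apply]
  have h := Jmap_sum e x (fun a b => a * b)
  simp only [RCLike.inner_apply, starRingEnd_apply, star_trivial]
  simp only [mul_comm ((Jmap e x).ofLp _)]
  rw [h]
  simp [mul_comm]

omit [Fintype ι] [Fintype α] in
lemma Jmap_continuous : Continuous (Jmap e) := by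
  refine (PiLp.continuous_toLp _ _).comp ?_
  apply continuous_pi
  intro i
  by_cases h : (e i).2 = 0 <;> simp only [ h, if_true, if_false, if_pos, if_neg] <;>
    fun_prop

end AuxJ

/-- If `n` is odd then `[M, Sⁿ]^(q) = [M, Sⁿ]` for every topological
space `M` and every `q ≥ 1`: every map `M → Sⁿ` is homotopic to the first member of a
`q`-tuple of pairwise coincidence free maps. -/
theorem stmt16 (n : ℕ) (hn : Odd n) (M : Type*) [TopologicalSpace M]
    (q : ℕ) (hq : 0 < q) (f : C(M, Sph n)) :
    ∃ g : C(M, Cfg q (Sph n)), f.Homotopic ((cfgProj q hq (Sph n)).comp g) := by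
  classical
  obtain ⟨k, hk⟩ := hn
  have h2 : n + 1 = (k + 1) * 2 := by omega
  let e : Fin (n + 1) ≃ Fin (k + 1) × Fin 2 := (finCongr h2).trans finProdFinEquiv.symm
  -- the q-th roots of unity give the rotation angles
  set ζ : ℂ := Complex.exp (2 * Real.pi * Complex.I / q) with hζ
  have hprim : IsPrimitiveRoot ζ q := Complex.isPrimitiveRoot_exp q hq.ne'
  have habsζ : ‖ζ‖ = 1 := by
    have h : (2 * (Real.pi : ℂ) * Complex.I / q) = ((2 * Real.pi / q : ℝ) : ℂ) * Complex.I := by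
      push_cast; ring
    rw [hζ, h, Complex.norm_exp_ofReal_mul_I]
  set c : Fin q → ℝ := fun i => (ζ ^ (i : ℕ)).re with hc
  set s : Fin q → ℝ := fun i => (ζ ^ (i : ℕ)).im with hs
  have hcs : ∀ i, c i ^ 2 + s i ^ 2 = 1 := by
    intro i
    have h1 : ‖ζ ^ (i : ℕ)‖ = 1 := by rw [norm_pow, habsζ, one_pow]
    have h2 := Complex.sq_norm (ζ ^ (i : ℕ))
    rw [h1, one_pow, Complex.normSq_apply] at h2
    simp only [hc, hs]
    nlinarith [h2]
  -- basic facts about unit vectors and Jmap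
  have hv1 : ∀ x : M, ‖(f x : EuclideanSpace ℝ (Fin (n + 1)))‖ = 1 :=
    fun x => mem_sphere_zero_iff_norm.mp (f x).2
  have key : ∀ (a b : ℝ) (v : EuclideanSpace ℝ (Fin (n + 1))), ‖v‖ = 1 →
      ‖a • v + b • Jmap e v‖ ^ 2 = a ^ 2 + b ^ 2 := by
    intro a b v hv
    rw [norm_add_sq_real, norm_smul, norm_smul, real_inner_smul_left, real_inner_smul_right,
      Jmap_inner, Jmap_norm, hv]
    simp [mul_pow, sq_abs]
  have hmem : ∀ (x : M) (i : Fin q),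
      c i • (f x : EuclideanSpace ℝ (Fin (n + 1))) + s i • Jmap e (f x) ∈ Sph n := by
    intro x i
    rw [mem_sphere_zero_iff_norm]
    have h := key (c i) (s i) (f x) (hv1 x)
    rw [hcs i] at h
    have h0 : (0 : ℝ) ≤ ‖c i • (f x : EuclideanSpace ℝ (Fin (n + 1))) + s i • Jmap e (f x)‖ :=
      norm_nonneg _
    nlinarith [h, h0]
  -- distinctness
  have hdist : ∀ (x : M) (i j : Fin q), i ≠ j →
      (⟨c i • (f x : EuclideanSpace ℝ (Fin (n + 1))) + s i • Jmap e (f x), hmem x i⟩ : Sph n) ≠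
        ⟨c j • (f x : EuclideanSpace ℝ (Fin (n + 1))) + s j • Jmap e (f x), hmem x j⟩ := by
    intro x i j hij hEq
    set v : EuclideanSpace ℝ (Fin (n + 1)) := (f x : EuclideanSpace ℝ (Fin (n + 1))) with hvdef
    have hw : c i • v + s i • Jmap e v = c j • v + s j • Jmap e v := by
      exact congrArg Subtype.val hEq
    have hvv : ⟪v, v⟫ = 1 := by rw [real_inner_self_eq_norm_sq, hv1 x]; norm_num
    have hvJ : ⟪v, Jmap e v⟫ = 0 := Jmap_inner e v
    have hJv : ⟪Jmap e v, v⟫ = 0 := by rw [real_inner_comm]; exact hvJ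
    have hJJ : ⟪Jmap e v, Jmap e v⟫ = 1 := by
      rw [real_inner_self_eq_norm_sq, Jmap_norm, hv1 x]; norm_num
    have h1 := congrArg (fun u => ⟪v, u⟫) hw
    have h2 := congrArg (fun u => ⟪Jmap e v, u⟫) hw
    simp only [inner_add_right, real_inner_smul_right, hvv, hvJ, hJv, hJJ,
      mul_one, mul_zero, add_zero, zero_add] at h1 h2
    have hzz : ζ ^ (i : ℕ) = ζ ^ (j : ℕ) := Complex.ext h1 h2
    exact hij (Fin.ext (hprim.pow_inj i.isLt j.isLt hzz))
  -- the tuple of maps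
  let g : C(M, Cfg q (Sph n)) :=
    ⟨fun x => ⟨fun i => ⟨c i • (f x : EuclideanSpace ℝ (Fin (n + 1))) + s i • Jmap e (f x),
        hmem x i⟩, fun i j hij => hdist x i j hij⟩, by
      refine Continuous.subtype_mk (continuous_pi fun i => Continuous.subtype_mk ?_ _) _
      exact ((continuous_subtype_val.comp f.continuous).const_smul (c i)).add
        (((Jmap_continuous e).comp (continuous_subtype_val.comp f.continuous)).const_smul (s i))⟩
  refine ⟨g, ?_⟩
  have hg : (cfgProj q hq (Sph n)).comp g = f := by
    refine ContinuousMap.ext fun x => Subtype.ext ?_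
    show (c ⟨0, hq⟩ • (f x : EuclideanSpace ℝ (Fin (n + 1))) + s ⟨0, hq⟩ • Jmap e (f x) :
      EuclideanSpace ℝ (Fin (n + 1))) = f x
    have hc0 : c ⟨0, hq⟩ = 1 := by simp [hc]
    have hs0 : s ⟨0, hq⟩ = 0 := by simp [hs]
    rw [hc0, hs0, one_smul, zero_smul, add_zero]
  rw [hg]
end
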